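/- Assume A is symmetric positive definite, B is injective (B·u = 0 implies u = 0), and the combined injectivity condition holds: for all u ∈ ℝᵐ and λ ∈ ℝᵖ, B·u + C·λ = 0 implies u = 0 and λ = 0. Then the Schur complement S := Cᵀ·A⁻¹·C − Cᵀ·A⁻¹·B·(Bᵀ·A⁻¹·B)⁻¹·Bᵀ·A⁻¹·C is a symmetric positive definite p×p matrix. -/

import Mathlib

open Matrix

private lemma swap_dot {n k : ℕ} (D : Matrix (Fin n) (Fin k) ℝ)
    (x : Fin k → ℝ) (y : Fin n → ℝ) : x ⬝ᵥ (Dᵀ *ᵥ y) = (D *ᵥ x) ⬝ᵥ y := by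
  rw [dotProduct_mulVec, vecMul_transpose]

/-- The Schur complement `S = CᵀA⁻¹C − CᵀA⁻¹B (BᵀA⁻¹B)⁻¹ BᵀA⁻¹C` is
symmetric positive definite. -/
theorem schur_complement_posDef (n m p : ℕ)
    (A : Matrix (Fin n) (Fin n) ℝ) (B : Matrix (Fin n) (Fin m) ℝ)
    (C : Matrix (Fin n) (Fin p) ℝ)
    (hAsymm : Aᵀ = A)
    (hApos : ∀ x : Fin n → ℝ, x ≠ 0 → 0 < x ⬝ᵥ (A *ᵥ x))
    (hB : ∀ u : Fin m → ℝ, B *ᵥ u = 0 → u = 0)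
    (hBC : ∀ (u : Fin m → ℝ) (lam : Fin p → ℝ),
      B *ᵥ u + C *ᵥ lam = 0 → u = 0 ∧ lam = 0)
    (S : Matrix (Fin p) (Fin p) ℝ)
    (hS : S = Cᵀ * A⁻¹ * C - Cᵀ * A⁻¹ * B * (Bᵀ * A⁻¹ * B)⁻¹ * (Bᵀ * A⁻¹ * C)) :
    Sᵀ = S ∧ ∀ lam : Fin p → ℝ, lam ≠ 0 → 0 < lam ⬝ᵥ (S *ᵥ lam) := by
  have hA : A.PosDef := by
    refine PosDef.of_dotProduct_mulVec_pos ?_ (fun x hx => ?_)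
    · rw [IsHermitian, conjTranspose_eq_transpose_of_trivial, hAsymm]
    · simpa using hApos x hx
  have hAinv : A⁻¹.PosDef := hA.inv
  have hAinvpos : ∀ x : Fin n → ℝ, x ≠ 0 → 0 < x ⬝ᵥ (A⁻¹ *ᵥ x) := by
    intro x hx
    simpa using hAinv.dotProduct_mulVec_pos hx
  have hAinvsymm : A⁻¹ᵀ = A⁻¹ := by
    rw [transpose_nonsing_inv, hAsymm]
  set M : Matrix (Fin m) (Fin m) ℝ := Bᵀ * A⁻¹ * B with hMdef
  have hM : M.PosDef := by
    refine PosDef.of_dotProduct_mulVec_pos ?_ (fun u hu => ?_)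
    · rw [IsHermitian, conjTranspose_eq_transpose_of_trivial]
      rw [hMdef]
      rw [Matrix.transpose_mul, Matrix.transpose_mul, transpose_transpose, hAinvsymm,
        Matrix.mul_assoc]
    · have hBu : B *ᵥ u ≠ 0 := fun h => hu (hB u h)
      have := hAinvpos (B *ᵥ u) hBu
      simpa [hMdef, ← mulVec_mulVec, swap_dot B] using this
  have hMinv : M⁻¹.PosDef := hM.inv
  have hMinvsymm : M⁻¹ᵀ = M⁻¹ := by
    rw [← conjTranspose_eq_transpose_of_trivial]
    exact hMinv.isHermitian
  have hMmul : M * M⁻¹ = 1 := mul_nonsing_inv M hM.det_pos.ne'.isUnit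
  constructor
  · rw [hS]
    simp only [transpose_sub, Matrix.transpose_mul, transpose_transpose, hAinvsymm,
      hMinvsymm, Matrix.mul_assoc]
  · intro lam hlam
    set w : Fin n → ℝ := C *ᵥ lam with hw
    set z : Fin m → ℝ := Bᵀ *ᵥ (A⁻¹ *ᵥ w) with hz
    set u : Fin m → ℝ := -(M⁻¹ *ᵥ z) with hu
    have hMu : M *ᵥ u = -z := by
      rw [hu, mulVec_neg, mulVec_mulVec, hMmul, one_mulVec]
    set v : Fin n → ℝ := B *ᵥ u + w with hv
    have hvne : v ≠ 0 := by
      intro h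
      exact hlam (hBC u lam h).2
    have key : lam ⬝ᵥ (S *ᵥ lam) = v ⬝ᵥ (A⁻¹ *ᵥ v) := by
      have hQ : (Cᵀ * A⁻¹ * B * M⁻¹ * (Bᵀ * A⁻¹ * C)) *ᵥ lam
          = Cᵀ *ᵥ (A⁻¹ *ᵥ (B *ᵥ (-u))) := by
        rw [hu, neg_neg, ← mulVec_mulVec, ← mulVec_mulVec, ← mulVec_mulVec,
          ← mulVec_mulVec, ← mulVec_mulVec, ← mulVec_mulVec, ← hw, ← hz]
      have hP : (Cᵀ * A⁻¹ * C) *ᵥ lam = Cᵀ *ᵥ (A⁻¹ *ᵥ w) := by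
        rw [← mulVec_mulVec, ← mulVec_mulVec, ← hw]
      have lhs : lam ⬝ᵥ (S *ᵥ lam)
          = w ⬝ᵥ (A⁻¹ *ᵥ w) + w ⬝ᵥ (A⁻¹ *ᵥ (B *ᵥ u)) := by
        rw [hS, sub_mulVec, dotProduct_sub, hP, hQ, swap_dot C, swap_dot C, ← hw,
          mulVec_neg, mulVec_neg, dotProduct_neg]
        ring
      have h1 : (B *ᵥ u) ⬝ᵥ (A⁻¹ *ᵥ (B *ᵥ u)) = u ⬝ᵥ (M *ᵥ u) := by
        rw [← swap_dot B, hMdef, ← mulVec_mulVec, ← mulVec_mulVec]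
      have h2 : (B *ᵥ u) ⬝ᵥ (A⁻¹ *ᵥ w) = u ⬝ᵥ z := by
        rw [← swap_dot B, hz]
      have rhs : v ⬝ᵥ (A⁻¹ *ᵥ v)
          = u ⬝ᵥ (M *ᵥ u) + u ⬝ᵥ z + w ⬝ᵥ (A⁻¹ *ᵥ (B *ᵥ u)) + w ⬝ᵥ (A⁻¹ *ᵥ w) := by
        rw [hv, mulVec_add, add_dotProduct, dotProduct_add, dotProduct_add, h1, h2]
        ring
      rw [lhs, rhs, hMu]
      rw [dotProduct_neg]
      ring
    rw [key]
    exact hAinvpos v hvne
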